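/- Let $P = \sum_{i \in N} P_i$ be a Minkowski sum of polymatroid base polytopes $P_i$ over a common finite ground set $E$, fix $j \in N$ and $0 \leq \bar{d}_j < d_j$ with $P_j$ scaled accordingly, and let $\bar{P} = (\bar{d}_j/d_j) P_j + \sum_{i \neq j} P_i$. Suppose $c_e : \mathbb{R}_{\geq 0} \to \mathbb{R}_{\geq 0}$ are continuous nondecreasing cost functions and $x$, $\bar{x}$ minimize the Beckmann potential $\Phi(x) = \sum_e \int_0^{x_e} c_e(t)\,dt$ over $P$ and over $\bar{P}$, respectively. Then $c_e(\bar{x}_e) \leq c_e(x_e)$ for every $e \in E$. -/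

import Mathlib

set_option linter.unusedSectionVars false
open Finset MeasureTheory Pointwise

/-- The polymatroid base polytope of `ρ`. -/
def basePolytope {E : Type*} [Fintype E] (ρ : Finset E → ℝ) : Set (E → ℝ) :=
  {x | (∀ e, 0 ≤ x e) ∧ (∀ U : Finset E, ∑ e ∈ U, x e ≤ ρ U) ∧ ∑ e, x e = ρ Finset.univ}

/-- The Beckmann potential. -/
noncomputable def beckmann {E : Type*} [Fintype E] (c : E → ℝ → ℝ) (x : E → ℝ) : ℝ :=
  ∑ e, ∫ t in (0:ℝ)..(x e), c e t

namespace BraessAux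

variable {E : Type*} [Fintype E] [DecidableEq E]

/-- Polymatroid rank function properties. -/
structure IsPolymat (ρ : Finset E → ℝ) : Prop where
  sub : ∀ U V : Finset E, ρ (U ∪ V) + ρ (U ∩ V) ≤ ρ U + ρ V
  mono : ∀ U V : Finset E, U ⊆ V → ρ U ≤ ρ V
  norm : ρ ∅ = 0

lemma IsPolymat.add {σ τ : Finset E → ℝ} (hσ : IsPolymat σ) (hτ : IsPolymat τ) :
    IsPolymat (fun U => σ U + τ U) := by
  refine ⟨fun U V => ?_, fun U V h => ?_, ?_⟩
  · have := hσ.sub U V; have := hτ.sub U V; linarith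
  · have := hσ.mono U V h; have := hτ.mono U V h; linarith
  · simp [hσ.norm, hτ.norm]

lemma IsPolymat.smul {σ : Finset E → ℝ} (hσ : IsPolymat σ) {a : ℝ} (ha : 0 ≤ a) :
    IsPolymat (fun U => a * σ U) := by
  refine ⟨fun U V => ?_, fun U V h => ?_, ?_⟩
  · have := hσ.sub U V; nlinarith
  · have := hσ.mono U V h; nlinarith
  · simp [hσ.norm]

lemma IsPolymat.finsetSum {N : Type*} [DecidableEq N] {s : Finset N} {ρ : N → Finset E → ℝ}
    (h : ∀ i ∈ s, IsPolymat (ρ i)) : IsPolymat (fun U => ∑ i ∈ s, ρ i U) := by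
  induction s using Finset.induction_on with
  | empty => exact ⟨by simp, by simp, by simp⟩
  | @insert a s' hni ih =>
    have h1 : IsPolymat (ρ a) := h a (Finset.mem_insert_self a s')
    have h2 : IsPolymat (fun U => ∑ i ∈ s', ρ i U) :=
      ih fun i hi => h i (Finset.mem_insert_of_mem hi)
    have := h1.add h2
    simpa [Finset.sum_insert hni] using this

lemma mem_basePolytope {ρ : Finset E → ℝ} {x : E → ℝ} :
    x ∈ basePolytope ρ ↔ (∀ e, 0 ≤ x e) ∧ (∀ U : Finset E, ∑ e ∈ U, x e ≤ ρ U) ∧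
      ∑ e, x e = ρ Finset.univ := Iff.rfl

section Chain

variable {n : ℕ} (f : Fin n ≃ E)

/-- The chain of prefix sets determined by an enumeration. -/
def chainT (k : ℕ) : Finset E := Finset.univ.filter (fun e => ((f.symm e : Fin n) : ℕ) < k)

lemma chainT_zero : chainT f 0 = ∅ := by simp [chainT]

lemma chainT_top : chainT f n = Finset.univ := by
  ext e; simp [chainT, (f.symm e).isLt]

lemma chainT_stab {k : ℕ} (hk : n ≤ k) : chainT f k = Finset.univ := by
  ext e; simp only [chainT, Finset.mem_filter, Finset.mem_univ, true_and, iff_true]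
  exact lt_of_lt_of_le (f.symm e).isLt hk

lemma chainT_succ (k : Fin n) :
    chainT f (k + 1) = insert (f k) (chainT f k) := by
  ext e
  simp only [chainT, Finset.mem_filter, Finset.mem_univ, true_and, Finset.mem_insert]
  constructor
  · intro h
    rcases Nat.lt_succ_iff_lt_or_eq.1 h with h | h
    · exact Or.inr h
    · left
      have : f.symm e = k := Fin.ext h
      rw [← this, Equiv.apply_symm_apply]
  · rintro (rfl | h)
    · simp [Nat.lt_succ_iff]
    · exact Nat.lt_succ_of_lt h

lemma not_mem_chainT (k : Fin n) : f k ∉ chainT f k := by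
  simp [chainT]

lemma chainT_subset_succ (k : ℕ) : chainT f k ⊆ chainT f (k + 1) := by
  intro e he
  simp only [chainT, Finset.mem_filter, Finset.mem_univ, true_and] at he ⊢
  exact Nat.lt_succ_of_lt he

/-- The greedy vertex for rank function `ρ` along the chain of `f`. -/
def greedyVec (ρ : Finset E → ℝ) : E → ℝ :=
  fun e => ρ (chainT f ((f.symm e : ℕ) + 1)) - ρ (chainT f (f.symm e))

lemma greedyVec_add (σ τ : Finset E → ℝ) :
    greedyVec f (fun U => σ U + τ U) = fun e => greedyVec f σ e + greedyVec f τ e := by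
  funext e; simp only [greedyVec]; ring

lemma greedyVec_nonneg {ρ : Finset E → ℝ} (hρ : IsPolymat ρ) (e : E) :
    0 ≤ greedyVec f ρ e := by
  have := hρ.mono _ _ (chainT_subset_succ f ((f.symm e : Fin n) : ℕ))
  simp only [greedyVec]; linarith

lemma greedyVec_sum_inter {ρ : Finset E → ℝ} (hρ : IsPolymat ρ) (U : Finset E) :
    ∀ k : ℕ, ∑ e ∈ U ∩ chainT f k, greedyVec f ρ e ≤ ρ (U ∩ chainT f k) := by
  intro k
  induction k with
  | zero => simp [chainT_zero, hρ.norm]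
  | succ k ih =>
    by_cases hk : k < n
    · set a := f ⟨k, hk⟩ with ha
      have hsucc : chainT f (k + 1) = insert a (chainT f k) := chainT_succ f ⟨k, hk⟩
      have hnm : a ∉ chainT f k := not_mem_chainT f ⟨k, hk⟩
      by_cases haU : a ∈ U
      · have hins : U ∩ chainT f (k + 1) = insert a (U ∩ chainT f k) := by
          rw [hsucc]; ext x
          simp only [Finset.mem_inter, Finset.mem_insert]
          constructor
          · rintro ⟨hx, (rfl | hx2)⟩
            · exact Or.inl rfl
            · exact Or.inr ⟨hx, hx2⟩
          · rintro (rfl | ⟨hx, hx2⟩)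
            · exact ⟨haU, Or.inl rfl⟩
            · exact ⟨hx, Or.inr hx2⟩
        have hna : a ∉ U ∩ chainT f k := fun h => hnm (Finset.mem_inter.1 h).2
        rw [hins, Finset.sum_insert hna]
        have hga : greedyVec f ρ a = ρ (chainT f (k + 1)) - ρ (chainT f k) := by
          simp only [greedyVec, ha, Equiv.symm_apply_apply]
        have hsub := hρ.sub (U ∩ chainT f (k + 1)) (chainT f k)
        have hu : (U ∩ chainT f (k + 1)) ∪ chainT f k = chainT f (k + 1) := by
          rw [hins]; ext x
          simp only [Finset.mem_union, Finset.mem_insert, Finset.mem_inter, hsucc]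
          constructor
          · rintro ((rfl | ⟨_, hx2⟩) | hx)
            · exact Or.inl rfl
            · exact Or.inr hx2
            · exact Or.inr hx
          · rintro (rfl | hx)
            · exact Or.inl (Or.inl rfl)
            · exact Or.inr hx
        have hi : (U ∩ chainT f (k + 1)) ∩ chainT f k = U ∩ chainT f k := by
          ext x
          simp only [Finset.mem_inter]
          constructor
          · rintro ⟨⟨hx1, _⟩, hx3⟩; exact ⟨hx1, hx3⟩
          · rintro ⟨hx1, hx2⟩
            exact ⟨⟨hx1, chainT_subset_succ f k hx2⟩, hx2⟩
        rw [hu, hi] at hsub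
        rw [hga, ← hins]
        linarith
      · have : U ∩ chainT f (k + 1) = U ∩ chainT f k := by
          rw [hsucc]; ext x
          simp only [Finset.mem_inter, Finset.mem_insert]
          constructor
          · rintro ⟨hx, (rfl | hx2)⟩
            · exact absurd hx haU
            · exact ⟨hx, hx2⟩
          · rintro ⟨hx, hx2⟩; exact ⟨hx, Or.inr hx2⟩
        rw [this]; exact ih
    · push_neg at hk
      have h1 : chainT f (k+1) = Finset.univ := chainT_stab f (le_trans hk (Nat.le_succ k))
      have h2 : chainT f k = Finset.univ := chainT_stab f hk
      rw [h1, ← h2]; exact ih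

lemma greedyVec_sum_eq {ρ : Finset E → ℝ} (hρ : IsPolymat ρ) :
    ∀ k : ℕ, ∑ e ∈ chainT f k, greedyVec f ρ e = ρ (chainT f k) := by
  intro k
  induction k with
  | zero => simp [chainT_zero, hρ.norm]
  | succ k ih =>
    by_cases hk : k < n
    · set a := f ⟨k, hk⟩ with ha
      have hsucc : chainT f (k + 1) = insert a (chainT f k) := chainT_succ f ⟨k, hk⟩
      have hnm : a ∉ chainT f k := not_mem_chainT f ⟨k, hk⟩
      rw [hsucc, Finset.sum_insert hnm, ih]
      have hga : greedyVec f ρ a = ρ (chainT f (k + 1)) - ρ (chainT f k) := by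
        simp only [greedyVec, ha, Equiv.symm_apply_apply]
      rw [hga, hsucc]; ring
    · push_neg at hk
      have h1 : chainT f (k+1) = Finset.univ := chainT_stab f (le_trans hk (Nat.le_succ k))
      have h2 : chainT f k = Finset.univ := chainT_stab f hk
      rw [h1, ← h2]; exact ih

lemma greedyVec_mem {ρ : Finset E → ℝ} (hρ : IsPolymat ρ) :
    greedyVec f ρ ∈ basePolytope ρ := by
  refine ⟨greedyVec_nonneg f hρ, fun U => ?_, ?_⟩
  · have := greedyVec_sum_inter f hρ U n
    rwa [chainT_top, Finset.inter_univ] at this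
  · have := greedyVec_sum_eq f hρ n
    rwa [chainT_top] at this

lemma greedyVec_opt (w : E → ℝ)
    (hsort : ∀ i j : Fin n, i ≤ j → w (f j) ≤ w (f i))
    {ρ : Finset E → ℝ} (hρ : IsPolymat ρ) (x : E → ℝ) (hx : x ∈ basePolytope ρ) :
    ∑ e, w e * x e ≤ ∑ e, w e * greedyVec f ρ e := by
  obtain ⟨hx0, hxU, hxT⟩ := hx
  have aux : ∀ k : ℕ, ∀ hk : k < n,
      w (f ⟨k, hk⟩) * (ρ (chainT f (k+1)) - ∑ e ∈ chainT f (k+1), x e) ≤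
        ∑ e ∈ chainT f (k+1), w e * (greedyVec f ρ e - x e) := by
    intro k
    induction k with
    | zero =>
      intro hk
      have h1 : chainT f (0 + 1) = insert (f ⟨0, hk⟩) (chainT f 0) := chainT_succ f ⟨0, hk⟩
      rw [h1, chainT_zero, Finset.insert_empty]
      rw [Finset.sum_singleton, Finset.sum_singleton]
      have hg : greedyVec f ρ (f ⟨0, hk⟩) = ρ (chainT f 1) - ρ (chainT f 0) := by
        simp only [greedyVec, Equiv.symm_apply_apply]
      rw [hg, chainT_zero, hρ.norm, h1, chainT_zero, Finset.insert_empty]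
      ring_nf
      exact le_rfl
    | succ k ih =>
      intro hk1
      have hk : k < n := Nat.lt_of_succ_lt hk1
      set a := f ⟨k+1, hk1⟩ with ha
      have hsucc : chainT f (k + 1 + 1) = insert a (chainT f (k+1)) := chainT_succ f ⟨k+1, hk1⟩
      have hnm : a ∉ chainT f (k+1) := not_mem_chainT f ⟨k+1, hk1⟩
      have hIH := ih hk
      have hsort' : w a ≤ w (f ⟨k, hk⟩) := by
        refine hsort ⟨k, hk⟩ ⟨k+1, hk1⟩ ?_
        simp [Fin.mk_le_mk]
      have hslack : 0 ≤ ρ (chainT f (k+1)) - ∑ e ∈ chainT f (k+1), x e :=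
        sub_nonneg.2 (hxU _)
      have hg : greedyVec f ρ a = ρ (chainT f (k+1+1)) - ρ (chainT f (k+1)) := by
        simp only [greedyVec, ha, Equiv.symm_apply_apply]
      rw [hsucc, Finset.sum_insert hnm, Finset.sum_insert hnm, ← hsucc, hg]
      have hmul := mul_le_mul_of_nonneg_right hsort' hslack
      linarith
  rcases Nat.eq_zero_or_pos n with hn | hn
  · subst hn
    have huniv : (Finset.univ : Finset E) = ∅ := by rw [← chainT_top f, chainT_zero]
    rw [huniv, Finset.sum_empty, Finset.sum_empty]
  · have hk : n - 1 < n := by omega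
    have haux := aux (n-1) hk
    have hn1 : n - 1 + 1 = n := by omega
    rw [hn1, chainT_top] at haux
    rw [hxT, sub_self, mul_zero] at haux
    have hsplit : ∑ e, w e * (greedyVec f ρ e - x e)
        = ∑ e, w e * greedyVec f ρ e - ∑ e, w e * x e := by
      rw [← Finset.sum_sub_distrib]
      exact Finset.sum_congr rfl fun e _ => by ring
    rw [hsplit] at haux
    linarith

end Chain

lemma exists_sorted_equiv (w : E → ℝ) :
    ∃ f : Fin (Fintype.card E) ≃ E, ∀ i j : Fin (Fintype.card E), i ≤ j → w (f j) ≤ w (f i) := by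
  classical
  let e0 := (Fintype.equivFin E).symm
  let s := Tuple.sort (fun i => -w (e0 i))
  refine ⟨s.trans e0, fun i j hij => ?_⟩
  have := Tuple.monotone_sort (fun i => -w (e0 i)) hij
  simp only [Function.comp_apply] at this
  simp only [Equiv.trans_apply]
  change w (e0 (s j)) ≤ w (e0 (s i))
  linarith [this]

lemma basePolytope_nonempty {ρ : Finset E → ℝ} (hρ : IsPolymat ρ) :
    (basePolytope ρ).Nonempty :=
  ⟨greedyVec (Fintype.equivFin E).symm ρ, greedyVec_mem _ hρ⟩

end BraessAux

namespace BraessAux2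
variable {E : Type*} [Fintype E] [DecidableEq E]
open BraessAux

lemma convex_basePolytope (ρ : Finset E → ℝ) : Convex ℝ (basePolytope ρ) := by
  rintro u ⟨hu0, huU, huT⟩ v ⟨hv0, hvU, hvT⟩ a b ha hb hab
  refine ⟨fun e => ?_, fun U => ?_, ?_⟩
  · have : (a • u + b • v) e = a * u e + b * v e := rfl
    rw [this]
    have := mul_nonneg ha (hu0 e); have := mul_nonneg hb (hv0 e); linarith
  · have : ∑ e ∈ U, (a • u + b • v) e = a * ∑ e ∈ U, u e + b * ∑ e ∈ U, v e := by
      rw [Finset.mul_sum, Finset.mul_sum, ← Finset.sum_add_distrib]; rfl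
    rw [this]
    calc a * ∑ e ∈ U, u e + b * ∑ e ∈ U, v e ≤ a * ρ U + b * ρ U := by
          have := mul_le_mul_of_nonneg_left (huU U) ha
          have := mul_le_mul_of_nonneg_left (hvU U) hb
          linarith
      _ = ρ U := by rw [← add_mul, hab, one_mul]
  · have : ∑ e, (a • u + b • v) e = a * ∑ e, u e + b * ∑ e, v e := by
      rw [Finset.mul_sum, Finset.mul_sum, ← Finset.sum_add_distrib]; rfl
    rw [this, huT, hvT, ← add_mul, hab, one_mul]

lemma isClosed_basePolytope (ρ : Finset E → ℝ) : IsClosed (basePolytope ρ) := by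
  have : basePolytope ρ = (⋂ e, {x : E → ℝ | 0 ≤ x e}) ∩
      ((⋂ U : Finset E, {x : E → ℝ | ∑ e ∈ U, x e ≤ ρ U}) ∩
        {x : E → ℝ | ∑ e, x e = ρ Finset.univ}) := by
    ext x; simp [basePolytope, Set.mem_iInter]
  rw [this]
  have hc : ∀ U : Finset E, Continuous (fun x : E → ℝ => ∑ e ∈ U, x e) :=
    fun U => continuous_finset_sum U (fun e _ => continuous_apply e)
  refine IsClosed.inter (isClosed_iInter fun e => isClosed_le continuous_const (continuous_apply e))
    (IsClosed.inter (isClosed_iInter fun U => isClosed_le (hc U) continuous_const)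
      (isClosed_eq (hc Finset.univ) continuous_const))

lemma isCompact_basePolytope (ρ : Finset E → ℝ) : IsCompact (basePolytope ρ) := by
  refine IsCompact.of_isClosed_subset (isCompact_univ_pi fun e => isCompact_Icc (a := (0:ℝ)) (b := ρ {e}))
    (isClosed_basePolytope ρ) ?_
  rintro x ⟨hx0, hxU, -⟩ e -
  exact ⟨hx0 e, by simpa using hxU {e}⟩

/-- Minkowski sum theorem for base polytopes. -/
lemma basePolytope_add {σ τ : Finset E → ℝ} (hσ : IsPolymat σ) (hτ : IsPolymat τ) :
    basePolytope (fun U => σ U + τ U) = basePolytope σ + basePolytope τ := by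
  apply Set.Subset.antisymm
  · intro x hx
    by_contra hxn
    have hconv : Convex ℝ (basePolytope σ + basePolytope τ) :=
      (convex_basePolytope σ).add (convex_basePolytope τ)
    have hcl : IsClosed (basePolytope σ + basePolytope τ) :=
      ((isCompact_basePolytope σ).add (isCompact_basePolytope τ)).isClosed
    obtain ⟨φ, u, hu1, hu2⟩ := geometric_hahn_banach_closed_point hconv hcl hxn
    set w : E → ℝ := fun e => φ ((Pi.single e 1 : E → ℝ)) with hw
    have hφ : ∀ y : E → ℝ, φ y = ∑ e, w e * y e := by
      intro y
      conv_lhs => rw [← Finset.univ_sum_single y]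
      rw [map_sum]
      refine Finset.sum_congr rfl fun e _ => ?_
      have h1 : (Pi.single e (y e) : E → ℝ) = (y e) • (Pi.single e 1 : E → ℝ) := by
        funext a; by_cases h : a = e <;> simp [Pi.single_apply, h]
      rw [h1, _root_.map_smul]
      simp only [smul_eq_mul, hw]; ring
    obtain ⟨f, hsort⟩ := exists_sorted_equiv w
    have hgσ := greedyVec_mem f hσ
    have hgτ := greedyVec_mem f hτ
    have hmem : greedyVec f σ + greedyVec f τ ∈ basePolytope σ + basePolytope τ :=
      Set.add_mem_add hgσ hgτ
    have hopt := greedyVec_opt f w hsort (hσ.add hτ) x hx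
    have h1 : φ x < u := by
      calc φ x = ∑ e, w e * x e := hφ x
        _ ≤ ∑ e, w e * greedyVec f (fun U => σ U + τ U) e := hopt
        _ = φ (greedyVec f σ + greedyVec f τ) := by
            rw [hφ, greedyVec_add]
            exact Finset.sum_congr rfl fun e _ => rfl
        _ < u := hu1 _ hmem
    linarith
  · rintro z ⟨u, hu, v, hv, rfl⟩
    obtain ⟨hu0, huU, huT⟩ := hu
    obtain ⟨hv0, hvU, hvT⟩ := hv
    refine ⟨fun e => add_nonneg (hu0 e) (hv0 e), fun U => ?_, ?_⟩
    · have : ∑ e ∈ U, (u + v) e = ∑ e ∈ U, u e + ∑ e ∈ U, v e := by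
        rw [← Finset.sum_add_distrib]; rfl
      rw [this]; exact add_le_add (huU U) (hvU U)
    · have : ∑ e, (u + v) e = ∑ e, u e + ∑ e, v e := by
        rw [← Finset.sum_add_distrib]; rfl
      rw [this, huT, hvT]

lemma basePolytope_zero : basePolytope (fun _ : Finset E => (0:ℝ)) = (0 : Set (E → ℝ)) := by
  ext x
  simp only [Set.mem_zero]
  constructor
  · rintro ⟨hx0, hxU, -⟩
    funext e
    have h1 := hxU {e}
    simp only [Finset.sum_singleton] at h1
    have := hx0 e
    exact le_antisymm h1 this
  · rintro rfl
    exact ⟨fun e => le_rfl, fun U => by simp, by simp⟩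

lemma smul_basePolytope {ρ : Finset E → ℝ} (hρ : IsPolymat ρ) {a : ℝ} (ha : 0 ≤ a) :
    a • basePolytope ρ = basePolytope (fun U => a * ρ U) := by
  rcases eq_or_lt_of_le ha with rfl | ha'
  · rw [Set.zero_smul_set (basePolytope_nonempty hρ)]
    have : (fun U : Finset E => (0:ℝ) * ρ U) = fun _ => (0:ℝ) := by funext U; ring
    rw [this, basePolytope_zero]
  · ext z
    constructor
    · rintro ⟨y, ⟨hy0, hyU, hyT⟩, rfl⟩
      refine ⟨fun e => ?_, fun U => ?_, ?_⟩
      · exact mul_nonneg ha (hy0 e)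
      · have : ∑ e ∈ U, (a • y) e = a * ∑ e ∈ U, y e := by
          rw [Finset.mul_sum]; rfl
        rw [this]
        exact mul_le_mul_of_nonneg_left (hyU U) ha
      · have : ∑ e, (a • y) e = a * ∑ e, y e := by
          rw [Finset.mul_sum]; rfl
        rw [this, hyT]
    · rintro ⟨hz0, hzU, hzT⟩
      refine Set.mem_smul_set.mpr ⟨a⁻¹ • z, ⟨fun e => ?_, fun U => ?_, ?_⟩, ?_⟩
      · exact mul_nonneg (inv_nonneg.2 ha) (hz0 e)
      · have h1 : ∑ e ∈ U, (a⁻¹ • z) e = a⁻¹ * ∑ e ∈ U, z e := by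
          rw [Finset.mul_sum]; rfl
        rw [h1, inv_mul_le_iff₀ ha']
        simpa using hzU U
      · have h1 : ∑ e, (a⁻¹ • z) e = a⁻¹ * ∑ e, z e := by
          rw [Finset.mul_sum]; rfl
        rw [h1]
        have hzT' : ∑ e, z e = a * ρ Finset.univ := hzT
        rw [hzT']
        field_simp
      · rw [smul_smul, mul_inv_cancel₀ (ne_of_gt ha'), one_smul]

lemma sum_basePolytope {N : Type*} [DecidableEq N] (s : Finset N) (ρ : N → Finset E → ℝ)
    (h : ∀ i ∈ s, IsPolymat (ρ i)) :
    ∑ i ∈ s, basePolytope (ρ i) = basePolytope (fun U => ∑ i ∈ s, ρ i U) := by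
  induction s using Finset.induction_on with
  | empty => simp [basePolytope_zero]
  | @insert a s' hni ih =>
    have h1 : IsPolymat (ρ a) := h a (Finset.mem_insert_self a s')
    have h2 : ∀ i ∈ s', IsPolymat (ρ i) := fun i hi => h i (Finset.mem_insert_of_mem hi)
    have heq : (fun U : Finset E => ∑ i ∈ insert a s', ρ i U)
        = fun U => ρ a U + ∑ i ∈ s', ρ i U := by
      funext U; rw [Finset.sum_insert hni]
    rw [Finset.sum_insert hni, ih h2, heq, basePolytope_add h1 (IsPolymat.finsetSum h2)]

end BraessAux2

namespace BraessAux3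
variable {E : Type*} [Fintype E] [DecidableEq E]
open BraessAux BraessAux2

lemma uIcc_subset_Ici {a b : ℝ} (ha : 0 ≤ a) (hb : 0 ≤ b) :
    Set.uIcc a b ⊆ Set.Ici 0 := by
  intro t ht
  rcases Set.mem_uIcc.mp ht with ⟨h1, _⟩ | ⟨h1, _⟩
  · exact le_trans ha h1
  · exact le_trans hb h1

lemma intInt {c : ℝ → ℝ} (hmono : MonotoneOn c (Set.Ici 0)) {a b : ℝ}
    (ha : 0 ≤ a) (hb : 0 ≤ b) : IntervalIntegrable c volume a b :=
  (hmono.mono (uIcc_subset_Ici ha hb)).intervalIntegrable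

lemma integral_le_of_monotoneOn {c : ℝ → ℝ} (hmono : MonotoneOn c (Set.Ici 0)) {a b : ℝ}
    (ha : 0 ≤ a) (hab : a ≤ b) : (∫ t in a..b, c t) ≤ (b - a) * c b := by
  have hb : (0:ℝ) ≤ b := le_trans ha hab
  have hint := intInt hmono ha hb
  have h2 : ∀ t ∈ Set.Icc a b, c t ≤ c b :=
    fun t ht => hmono (le_trans ha ht.1) hb ht.2
  have := intervalIntegral.integral_mono_on hab hint intervalIntegrable_const h2
  simpa [intervalIntegral.integral_const, smul_eq_mul] using this

lemma le_integral_of_monotoneOn {c : ℝ → ℝ} (hmono : MonotoneOn c (Set.Ici 0)) {a b : ℝ}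
    (ha : 0 ≤ a) (hab : a ≤ b) : (b - a) * c a ≤ ∫ t in a..b, c t := by
  have hb : (0:ℝ) ≤ b := le_trans ha hab
  have hint := intInt hmono ha hb
  have h2 : ∀ t ∈ Set.Icc a b, c a ≤ c t :=
    fun t ht => hmono ha (le_trans ha ht.1) ht.1
  have := intervalIntegral.integral_mono_on hab intervalIntegrable_const hint h2
  simpa [intervalIntegral.integral_const, smul_eq_mul] using this

/-- Blocked-exchange: if `z` minimizes the Beckmann potential over the base polytope, and
moving mass from `f` to `e` would strictly decrease cost, there is a tight set containing `e`
but not `f`. -/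
theorem exists_blocking {ρ : Finset E → ℝ} (hρ : IsPolymat ρ)
    {c : E → ℝ → ℝ}
    (hc_cont : ∀ e, ContinuousOn (c e) (Set.Ici 0))
    (hc_mono : ∀ e, MonotoneOn (c e) (Set.Ici 0))
    {z : E → ℝ} (hz : z ∈ basePolytope ρ)
    (hzmin : ∀ y ∈ basePolytope ρ, beckmann c z ≤ beckmann c y)
    {e f : E} (hef : e ≠ f) (hzf : 0 < z f) (hlt : c e (z e) < c f (z f)) :
    ∃ T : Finset E, e ∈ T ∧ f ∉ T ∧ ∑ g ∈ T, z g = ρ T := by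
  obtain ⟨hz0, hzU, hzT⟩ := hz
  by_contra hT
  push_neg at hT
  classical
  set F := Finset.univ.powerset.filter (fun U : Finset E => e ∈ U ∧ f ∉ U) with hF
  have hFe : ({e} : Finset E) ∈ F := by
    simp only [hF, Finset.mem_filter, Finset.mem_powerset]
    exact ⟨Finset.subset_univ _, Finset.mem_singleton_self e,
      fun h => hef (Finset.mem_singleton.1 h).symm⟩
  have hslack : ∀ U ∈ F, 0 < ρ U - ∑ g ∈ U, z g := by
    intro U hU
    simp only [hF, Finset.mem_filter, Finset.mem_powerset] at hU
    have := hT U hU.2.1 hU.2.2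
    have h2 := hzU U
    rcases lt_or_eq_of_le h2 with h | h
    · linarith
    · exact absurd h this
  have hFim : (F.image (fun U => ρ U - ∑ g ∈ U, z g)).Nonempty :=
    ⟨_, Finset.mem_image_of_mem _ hFe⟩
  set ε1 := (F.image (fun U => ρ U - ∑ g ∈ U, z g)).min' hFim with hε1
  have hε1pos : 0 < ε1 := by
    obtain ⟨U, hU, hUeq⟩ := Finset.mem_image.1 ((F.image _).min'_mem hFim)
    rw [hε1, ← hUeq]
    exact hslack U hU
  have hε1le : ∀ U ∈ F, ε1 ≤ ρ U - ∑ g ∈ U, z g :=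
    fun U hU => Finset.min'_le _ _ (Finset.mem_image_of_mem _ hU)
  set γ := (c f (z f) - c e (z e)) / 2 with hγ
  have hγpos : 0 < γ := by rw [hγ]; linarith
  have hce : ContinuousWithinAt (c e) (Set.Ici 0) (z e) := hc_cont e (z e) (hz0 e)
  have hcf : ContinuousWithinAt (c f) (Set.Ici 0) (z f) := hc_cont f (z f) (le_of_lt hzf)
  rw [Metric.continuousWithinAt_iff] at hce hcf
  obtain ⟨δ1, hδ1pos, hδ1⟩ := hce γ hγpos
  obtain ⟨δ2, hδ2pos, hδ2⟩ := hcf γ hγpos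
  set δ := min (min ε1 (z f)) (min (δ1/2) (δ2/2)) with hδ
  have hδpos : 0 < δ :=
    lt_min (lt_min hε1pos hzf) (lt_min (by linarith) (by linarith))
  have hδε1 : δ ≤ ε1 := le_trans (min_le_left _ _) (min_le_left _ _)
  have hδzf : δ ≤ z f := le_trans (min_le_left _ _) (min_le_right _ _)
  have hδδ1 : δ < δ1 := lt_of_le_of_lt (le_trans (min_le_right _ _) (min_le_left _ _)) (by linarith)
  have hδδ2 : δ < δ2 := lt_of_le_of_lt (le_trans (min_le_right _ _) (min_le_right _ _)) (by linarith)
  have hub : c e (z e + δ) < c e (z e) + γ := by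
    have h1 : z e + δ ∈ Set.Ici (0:ℝ) := by
      simp only [Set.mem_Ici]; linarith [hz0 e]
    have h2 : dist (z e + δ) (z e) < δ1 := by
      rw [Real.dist_eq]
      rw [abs_of_nonneg (by linarith : (0:ℝ) ≤ z e + δ - z e)]
      linarith
    have := hδ1 h1 h2
    rw [Real.dist_eq, abs_lt] at this
    linarith [this.2]
  have hlb : c f (z f) - γ < c f (z f - δ) := by
    have h1 : z f - δ ∈ Set.Ici (0:ℝ) := by
      simp only [Set.mem_Ici]; linarith
    have h2 : dist (z f - δ) (z f) < δ2 := by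
      rw [Real.dist_eq]
      rw [abs_of_nonpos (by linarith : z f - δ - z f ≤ 0)]
      linarith
    have := hδ2 h1 h2
    rw [Real.dist_eq, abs_lt] at this
    linarith [this.1]
  set z' : E → ℝ := fun g => z g + (if g = e then δ else 0) - (if g = f then δ else 0) with hz'
  have hsum : ∀ U : Finset E, ∑ g ∈ U, z' g =
      ∑ g ∈ U, z g + (if e ∈ U then δ else 0) - (if f ∈ U then δ else 0) := by
    intro U
    simp only [hz']
    rw [Finset.sum_sub_distrib, Finset.sum_add_distrib]
    congr 1
    · congr 1
      exact Finset.sum_ite_eq' U e (fun _ => δ)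
    · exact Finset.sum_ite_eq' U f (fun _ => δ)
  have hmem : z' ∈ basePolytope ρ := by
    refine ⟨fun g => ?_, fun U => ?_, ?_⟩
    · show 0 ≤ (z g + if g = e then δ else 0) - (if g = f then δ else 0)
      by_cases h1 : g = e
      · rw [if_pos h1, if_neg (fun hgf => hef (h1.symm.trans hgf))]
        linarith [hz0 g, hδpos.le]
      · rw [if_neg h1]
        by_cases h2 : g = f
        · rw [if_pos h2, h2]
          linarith [hδzf]
        · rw [if_neg h2]
          linarith [hz0 g]
    · rw [hsum U]
      by_cases heU : e ∈ U <;> by_cases hfU : f ∈ U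
      · rw [if_pos heU, if_pos hfU]; linarith [hzU U]
      · rw [if_pos heU, if_neg hfU]
        have hUF : U ∈ F := by
          simp only [hF, Finset.mem_filter, Finset.mem_powerset]
          exact ⟨Finset.subset_univ _, heU, hfU⟩
        have := hε1le U hUF
        linarith
      · rw [if_neg heU, if_pos hfU]; linarith [hzU U]
      · rw [if_neg heU, if_neg hfU]; linarith [hzU U]
    · rw [hsum Finset.univ, if_pos (Finset.mem_univ e), if_pos (Finset.mem_univ f), hzT]
      ring
  have hint0e : IntervalIntegrable (c e) volume 0 (z e) := intInt (hc_mono e) le_rfl (hz0 e)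
  have hint0e' : IntervalIntegrable (c e) volume 0 (z e + δ) :=
    intInt (hc_mono e) le_rfl (by linarith [hz0 e])
  have hint0f : IntervalIntegrable (c f) volume 0 (z f) := intInt (hc_mono f) le_rfl (le_of_lt hzf)
  have hint0f' : IntervalIntegrable (c f) volume 0 (z f - δ) :=
    intInt (hc_mono f) le_rfl (by linarith)
  have hterme : z' e = z e + δ := by
    show (z e + if e = e then δ else 0) - (if e = f then δ else 0) = z e + δ
    rw [if_pos rfl, if_neg hef, sub_zero]
  have htermf : z' f = z f - δ := by
    show (z f + if f = e then δ else 0) - (if f = f then δ else 0) = z f - δ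
    rw [if_pos rfl, if_neg (Ne.symm hef), add_zero]
  have hcost : beckmann c z' < beckmann c z := by
    have hsplit : beckmann c z' - beckmann c z =
        ∑ g, ((∫ t in (0:ℝ)..(z' g), c g t) - ∫ t in (0:ℝ)..(z g), c g t) := by
      rw [beckmann, beckmann, ← Finset.sum_sub_distrib]
    set G : E → ℝ := fun g => (∫ t in (0:ℝ)..(z' g), c g t) - ∫ t in (0:ℝ)..(z g), c g t with hG
    have hzero : ∀ g ∈ (Finset.univ.erase e).erase f, G g = 0 := by
      intro g hg
      have hgf : g ≠ f := (Finset.mem_erase.1 hg).1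
      have hge : g ≠ e := (Finset.mem_erase.1 (Finset.mem_erase.1 hg).2).1
      have hzg : z' g = z g := by
        show (z g + if g = e then δ else 0) - (if g = f then δ else 0) = z g
        rw [if_neg hge, if_neg hgf, add_zero, sub_zero]
      simp [hG, hzg]
    have hfe : f ∈ Finset.univ.erase e := Finset.mem_erase.2 ⟨Ne.symm hef, Finset.mem_univ f⟩
    have hsum2 : ∑ g, G g = G e + (G f + ∑ g ∈ (Finset.univ.erase e).erase f, G g) := by
      rw [← Finset.add_sum_erase _ G (Finset.mem_univ e), ← Finset.add_sum_erase _ G hfe]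
    have hGe : G e ≤ δ * c e (z e + δ) := by
      have h1 : G e = ∫ t in (z e)..(z e + δ), c e t := by
        rw [hG]
        simp only [hterme]
        exact intervalIntegral.integral_interval_sub_left hint0e' hint0e
      rw [h1]
      have := integral_le_of_monotoneOn (hc_mono e) (hz0 e) (by linarith : z e ≤ z e + δ)
      calc (∫ t in (z e)..(z e + δ), c e t) ≤ (z e + δ - z e) * c e (z e + δ) := this
        _ = δ * c e (z e + δ) := by ring_nf
    have hGf : G f ≤ -(δ * c f (z f - δ)) := by
      have h1 : G f = -(∫ t in (z f - δ)..(z f), c f t) := by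
        rw [hG]
        simp only [htermf]
        rw [← intervalIntegral.integral_symm]
        exact intervalIntegral.integral_interval_sub_left hint0f' hint0f
      rw [h1, neg_le_neg_iff]
      have := le_integral_of_monotoneOn (hc_mono f) (by linarith : (0:ℝ) ≤ z f - δ)
        (by linarith : z f - δ ≤ z f)
      calc δ * c f (z f - δ) = (z f - (z f - δ)) * c f (z f - δ) := by ring_nf
        _ ≤ ∫ t in (z f - δ)..(z f), c f t := this
    have hkey : c e (z e + δ) < c f (z f - δ) := by
      have : c e (z e) + γ = c f (z f) - γ := by rw [hγ]; ring
      linarith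
    have hneg : G e + G f < 0 := by
      have := mul_lt_mul_of_pos_left hkey hδpos
      linarith
    have : beckmann c z' - beckmann c z < 0 := by
      rw [hsplit]
      have hzsum : ∑ g ∈ (Finset.univ.erase e).erase f, G g = 0 := Finset.sum_eq_zero hzero
      calc ∑ g, G g = G e + (G f + ∑ g ∈ (Finset.univ.erase e).erase f, G g) := hsum2
        _ = G e + G f := by rw [hzsum]; ring
        _ < 0 := hneg
    linarith
  exact absurd (hzmin z' hmem) (not_le.2 hcost)

lemma tight_union_inter {ρ : Finset E → ℝ} (hρ : IsPolymat ρ) {z : E → ℝ}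
    (hzU : ∀ U : Finset E, ∑ g ∈ U, z g ≤ ρ U) {A B : Finset E}
    (hA : ∑ g ∈ A, z g = ρ A) (hB : ∑ g ∈ B, z g = ρ B) :
    (∑ g ∈ A ∪ B, z g = ρ (A ∪ B)) ∧ (∑ g ∈ A ∩ B, z g = ρ (A ∩ B)) := by
  have hsum : ∑ g ∈ A ∪ B, z g + ∑ g ∈ A ∩ B, z g = ∑ g ∈ A, z g + ∑ g ∈ B, z g :=
    Finset.sum_union_inter
  have h1 := hzU (A ∪ B)
  have h2 := hzU (A ∩ B)
  have h3 := hρ.sub A B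
  constructor <;> linarith

lemma exists_min_tight {ρ : Finset E → ℝ} (hρ : IsPolymat ρ) {z : E → ℝ}
    (hzU : ∀ U : Finset E, ∑ g ∈ U, z g ≤ ρ U) (hzT : ∑ g, z g = ρ Finset.univ) (e : E) :
    ∃ U : Finset E, e ∈ U ∧ (∑ g ∈ U, z g = ρ U) ∧
      ∀ T : Finset E, e ∈ T → (∑ g ∈ T, z g = ρ T) → U ⊆ T := by
  classical
  set F := Finset.univ.powerset.filter
    (fun T : Finset E => e ∈ T ∧ ∑ g ∈ T, z g = ρ T) with hF
  have hFne : (Finset.univ : Finset E) ∈ F := by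
    simp only [hF, Finset.mem_filter, Finset.mem_powerset]
    exact ⟨Finset.Subset.refl _, Finset.mem_univ e, hzT⟩
  obtain ⟨U, hUF, hUmin⟩ := F.exists_min_image (fun T => T.card) ⟨_, hFne⟩
  simp only [hF, Finset.mem_filter, Finset.mem_powerset] at hUF
  refine ⟨U, hUF.2.1, hUF.2.2, fun T heT htT => ?_⟩
  have hint : U ∩ T ∈ F := by
    simp only [hF, Finset.mem_filter, Finset.mem_powerset]
    exact ⟨Finset.subset_univ _, Finset.mem_inter.2 ⟨hUF.2.1, heT⟩,
      (tight_union_inter hρ hzU hUF.2.2 htT).2⟩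
  have hcard := hUmin _ hint
  have hsub : U ∩ T ⊆ U := Finset.inter_subset_left
  have heq : U ∩ T = U := Finset.eq_of_subset_of_card_le hsub hcard
  intro g hg
  have : g ∈ U ∩ T := heq.symm ▸ hg
  exact (Finset.mem_inter.1 this).2

lemma exists_max_tight_avoiding {ρ : Finset E → ℝ} (hρ : IsPolymat ρ) {z : E → ℝ}
    (hzU : ∀ U : Finset E, ∑ g ∈ U, z g ≤ ρ U) (e : E) :
    ∃ W : Finset E, e ∉ W ∧ (∑ g ∈ W, z g = ρ W) ∧
      ∀ T : Finset E, e ∉ T → (∑ g ∈ T, z g = ρ T) → T ⊆ W := by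
  classical
  set F := Finset.univ.powerset.filter
    (fun T : Finset E => e ∉ T ∧ ∑ g ∈ T, z g = ρ T) with hF
  have hFne : (∅ : Finset E) ∈ F := by
    simp only [hF, Finset.mem_filter, Finset.mem_powerset]
    exact ⟨Finset.empty_subset _, Finset.notMem_empty e, by simp [hρ.norm]⟩
  obtain ⟨W, hWF, hWmax⟩ := F.exists_max_image (fun T => T.card) ⟨_, hFne⟩
  simp only [hF, Finset.mem_filter, Finset.mem_powerset] at hWF
  refine ⟨W, hWF.2.1, hWF.2.2, fun T heT htT => ?_⟩
  have hun : T ∪ W ∈ F := by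
    simp only [hF, Finset.mem_filter, Finset.mem_powerset]
    refine ⟨Finset.subset_univ _, ?_, (tight_union_inter hρ hzU htT hWF.2.2).1⟩
    simp only [Finset.mem_union]
    rintro (h | h)
    · exact heT h
    · exact hWF.2.1 h
  have hcard := hWmax _ hun
  have hsub : W ⊆ T ∪ W := Finset.subset_union_right
  have heq : W = T ∪ W := Finset.eq_of_subset_of_card_le hsub hcard
  intro g hg
  have : g ∈ T ∪ W := Finset.mem_union_left _ hg
  rw [← heq] at this
  exact this

end BraessAux3

namespace BraessMain
open BraessAux BraessAux2 BraessAux3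

variable {E : Type*} [Fintype E] [DecidableEq E]

/-- Key comparison theorem: minimizers of the Beckmann potential over nested base polytopes
`B(σ+τ)` and `B(σ)` have pointwise comparable costs. -/
theorem key {σ τ : Finset E → ℝ} (hσ : IsPolymat σ) (hτ : IsPolymat τ)
    {c : E → ℝ → ℝ}
    (hc_cont : ∀ e, ContinuousOn (c e) (Set.Ici 0))
    (hc_mono : ∀ e, MonotoneOn (c e) (Set.Ici 0))
    {x xbar : E → ℝ}
    (hx : x ∈ basePolytope (fun U => σ U + τ U))
    (hxmin : ∀ y ∈ basePolytope (fun U => σ U + τ U), beckmann c x ≤ beckmann c y)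
    (hxbar : xbar ∈ basePolytope σ)
    (hxbarmin : ∀ y ∈ basePolytope σ, beckmann c xbar ≤ beckmann c y) :
    ∀ e, c e (xbar e) ≤ c e (x e) := by
  by_contra hcon
  push_neg at hcon
  classical
  set V := Finset.univ.filter (fun e => c e (x e) < c e (xbar e)) with hV
  have hVne : V.Nonempty := by
    obtain ⟨e, he⟩ := hcon
    exact ⟨e, by simp [hV, he]⟩
  obtain ⟨es, hesV, hesmax⟩ := V.exists_max_image (fun e => c e (xbar e)) hVne
  simp only [hV, Finset.mem_filter] at hesV
  have hes : c es (x es) < c es (xbar es) := hesV.2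
  obtain ⟨hx0, hxU, hxT⟩ := hx
  obtain ⟨hb0, hbU, hbT⟩ := hxbar
  have hxlt : x es < xbar es := by
    by_contra h
    push_neg at h
    exact absurd (hc_mono es (hb0 es) (hx0 es) h) (not_le.2 hes)
  obtain ⟨W, hWes, hWtight, hWmax⟩ := exists_max_tight_avoiding hσ hbU es
  have hWlow : ∀ g, c g (xbar g) < c es (xbar es) → g ∈ W := by
    intro g hg
    have hgne : g ≠ es := fun h => absurd hg (by rw [h]; exact lt_irrefl _)
    have hxbares : 0 < xbar es := lt_of_le_of_lt (hx0 es) hxlt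
    obtain ⟨T, hgT, hesT, hTt⟩ :=
      exists_blocking hσ hc_cont hc_mono ⟨hb0, hbU, hbT⟩ hxbarmin hgne hxbares hg
    exact hWmax T hesT hTt hgT
  obtain ⟨U, hesU, hUtight, hUmin⟩ := exists_min_tight (hσ.add hτ) hxU hxT es
  have hUle : ∀ f ∈ U, f ≠ es → f ∉ W → x f ≤ xbar f := by
    intro f hfU hfes hfW
    by_contra h
    push_neg at h
    have h1 : c es (xbar es) ≤ c f (xbar f) := by
      by_contra h2
      push_neg at h2
      exact hfW (hWlow f h2)
    have h2 : c f (xbar f) ≤ c f (x f) := hc_mono f (hb0 f) (hx0 f) h.le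
    have h3 : c es (x es) < c f (x f) := by linarith
    have hxf : 0 < x f := lt_of_le_of_lt (hb0 f) h
    obtain ⟨T, hesT, hfT, hTt⟩ :=
      exists_blocking (hσ.add hτ) hc_cont hc_mono ⟨hx0, hxU, hxT⟩ hxmin (Ne.symm hfes) hxf h3
    exact hfT (hUmin T hesT hTt hfU)
  have h6 : ∑ g ∈ U \ W, x g < ∑ g ∈ U \ W, xbar g := by
    apply Finset.sum_lt_sum
    · intro g hg
      rcases eq_or_ne g es with rfl | hgne
      · exact hxlt.le
      · exact hUle g (Finset.mem_sdiff.1 hg).1 hgne (Finset.mem_sdiff.1 hg).2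
    · exact ⟨es, Finset.mem_sdiff.2 ⟨hesU, hWes⟩, hxlt⟩
  have h7 : ∑ g ∈ U ∩ W, x g + ∑ g ∈ U \ W, x g = ∑ g ∈ U, x g :=
    Finset.sum_inter_add_sum_sdiff U W x
  have hset : U ∪ W = W ∪ (U \ W) := by
    rw [Finset.union_sdiff_self_eq_union, Finset.union_comm]
  have h8 : ∑ g ∈ U ∪ W, xbar g = ∑ g ∈ W, xbar g + ∑ g ∈ U \ W, xbar g := by
    rw [hset, Finset.sum_union Finset.disjoint_sdiff]
  have hUtight' : ∑ g ∈ U, x g = σ U + τ U := hUtight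
  have h2'' : ∑ g ∈ U ∩ W, x g ≤ σ (U ∩ W) + τ (U ∩ W) := hxU (U ∩ W)
  have h3'' : (σ (U ∪ W) + τ (U ∪ W)) + (σ (U ∩ W) + τ (U ∩ W)) ≤
      (σ U + τ U) + (σ W + τ W) := (hσ.add hτ).sub U W
  have h5'' : ∑ g ∈ U ∪ W, xbar g ≤ σ (U ∪ W) := hbU (U ∪ W)
  have h9 : τ W ≤ τ (U ∪ W) := hτ.mono W (U ∪ W) Finset.subset_union_right
  linarith [hWtight]

end BraessMain

theorem stmt2 {E N : Type*} [Fintype E] [DecidableEq E] [Fintype N] [DecidableEq N]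
    (ρ : N → Finset E → ℝ)
    (hsub : ∀ i, ∀ U V : Finset E, ρ i (U ∪ V) + ρ i (U ∩ V) ≤ ρ i U + ρ i V)
    (hmono : ∀ i, ∀ U V : Finset E, U ⊆ V → ρ i U ≤ ρ i V)
    (hnorm : ∀ i, ρ i ∅ = 0)
    (j : N) (dj dbarj : ℝ) (hd : 0 ≤ dbarj) (hdlt : dbarj < dj)
    (c : E → ℝ → ℝ)
    (hc_cont : ∀ e, ContinuousOn (c e) (Set.Ici 0))
    (hc_mono : ∀ e, MonotoneOn (c e) (Set.Ici 0))
    (hc_nonneg : ∀ e, ∀ t ∈ Set.Ici (0:ℝ), 0 ≤ c e t)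
    (P Pbar : Set (E → ℝ))
    (hP : P = ∑ i : N, basePolytope (ρ i))
    (hPbar : Pbar = (dbarj / dj) • basePolytope (ρ j)
        + ∑ i ∈ Finset.univ.erase j, basePolytope (ρ i))
    (x xbar : E → ℝ)
    (hx : x ∈ P) (hxmin : ∀ y ∈ P, beckmann c x ≤ beckmann c y)
    (hxbar : xbar ∈ Pbar) (hxbarmin : ∀ y ∈ Pbar, beckmann c xbar ≤ beckmann c y) :
    ∀ e, c e (xbar e) ≤ c e (x e) := by
  classical
  have hdj : 0 < dj := lt_of_le_of_lt hd hdlt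
  set lam := dbarj / dj with hlam
  have hlam0 : 0 ≤ lam := div_nonneg hd hdj.le
  have hlam1 : lam < 1 := (div_lt_one hdj).2 hdlt
  set σf : Finset E → ℝ := fun U => lam * ρ j U + ∑ i ∈ Finset.univ.erase j, ρ i U with hσf
  set τf : Finset E → ℝ := fun U => (1 - lam) * ρ j U with hτf
  have hpoly : ∀ i, BraessAux.IsPolymat (ρ i) := fun i => ⟨hsub i, hmono i, hnorm i⟩
  have hσp : BraessAux.IsPolymat σf :=
    ((hpoly j).smul hlam0).add (BraessAux.IsPolymat.finsetSum (fun i _ => hpoly i))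
  have hτp : BraessAux.IsPolymat τf := (hpoly j).smul (by linarith)
  have hfun : (fun U : Finset E => ∑ i, ρ i U) = fun U => σf U + τf U := by
    funext U
    have h1 : ∑ i, ρ i U = ρ j U + ∑ i ∈ Finset.univ.erase j, ρ i U :=
      (Finset.add_sum_erase _ _ (Finset.mem_univ j)).symm
    rw [h1, hσf, hτf]
    ring
  have hPeq : P = basePolytope (fun U => σf U + τf U) := by
    rw [hP, BraessAux2.sum_basePolytope Finset.univ ρ (fun i _ => hpoly i), hfun]
  have hPbeq : Pbar = basePolytope σf := by
    rw [hPbar, BraessAux2.smul_basePolytope (hpoly j) hlam0,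
      BraessAux2.sum_basePolytope (Finset.univ.erase j) ρ (fun i _ => hpoly i),
      ← BraessAux2.basePolytope_add ((hpoly j).smul hlam0)
        (BraessAux.IsPolymat.finsetSum (fun i _ => hpoly i))]
  rw [hPeq] at hx hxmin
  rw [hPbeq] at hxbar hxbarmin
  exact BraessMain.key hσp hτp hc_cont hc_mono hx hxmin hxbar hxbarmin
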